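/- Parametrized two-sided bounds: in the Case II setting, for every δ > 0, (1 − √2/(2δ))(‖x−x̃‖² + ‖A(x−x̃)‖²) + (1 − √2·δ/2)(‖y−ỹ‖² + ‖A*(y−ỹ)‖²) ≤ M ≤ (1 + √2/(2δ))(‖x−x̃‖² + ‖A(x−x̃)‖²) + (1 + √2·δ/2)(‖y−ỹ‖² + ‖A*(y−ỹ)‖²), where M = ‖f − i x̃ − A*ỹ‖² + ‖ỹ − A x̃‖². -/

import Mathlib

open scoped ComplexInnerProductSpace

lemma aux_sqle {X Y : ℝ} (hX : 0 ≤ X) (hY : 0 ≤ Y) (h : Y^2 ≤ X^2) : Y ≤ X := by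
  nlinarith [sq_nonneg (X - Y), sq_nonneg (X + Y)]

lemma aux_key (a b c d r δ : ℝ) (ha : 0 ≤ a) (hb : 0 ≤ b) (hc : 0 ≤ c) (hd : 0 ≤ d)
    (hδ : 0 < δ) (hr : r ^ 2 ≤ 2 * (a * b) * (c * d)) :
    2 * |r| ≤ Real.sqrt 2 / (2 * δ) * (a ^ 2 + b ^ 2)
      + Real.sqrt 2 * δ / 2 * (c ^ 2 + d ^ 2) := by
  have hs0 : 0 ≤ Real.sqrt 2 := Real.sqrt_nonneg 2
  have hs2 : Real.sqrt 2 ^ 2 = 2 := Real.sq_sqrt (by norm_num)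
  set s := Real.sqrt 2 with hs
  have hrw : s / (2 * δ) * (a ^ 2 + b ^ 2) + s * δ / 2 * (c ^ 2 + d ^ 2)
      = (s * (a ^ 2 + b ^ 2) + s * δ ^ 2 * (c ^ 2 + d ^ 2)) / (2 * δ) := by
    field_simp
  have hrw2 : 2 * |r| = 4 * δ * |r| / (2 * δ) := by field_simp; ring
  rw [hrw, hrw2, div_le_div_iff_of_pos_right (by positivity)]
  have hZ : 4 * δ * |r| ≤ 2 * s * (a * b + δ ^ 2 * (c * d)) := by
    apply aux_sqle
    · positivity
    · positivity
    · have h1 : δ ^ 2 * r ^ 2 ≤ δ ^ 2 * (2 * (a * b) * (c * d)) :=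
        mul_le_mul_of_nonneg_left hr (by positivity)
      have h2 := sq_nonneg (a * b - δ ^ 2 * (c * d))
      have habs : |r| ^ 2 = r ^ 2 := sq_abs r
      have hexp : (2 * s * (a * b + δ ^ 2 * (c * d))) ^ 2
          = 8 * (a * b + δ ^ 2 * (c * d)) ^ 2 := by
        rw [mul_pow, mul_pow, hs2]; ring
      calc (4 * δ * |r|) ^ 2 ≤ 8 * (a * b + δ ^ 2 * (c * d)) ^ 2 := by nlinarith [h1, h2, habs]
      _ = (2 * s * (a * b + δ ^ 2 * (c * d))) ^ 2 := hexp.symm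
  have hX : 2 * s * (a * b + δ ^ 2 * (c * d)) ≤ s * (a ^ 2 + b ^ 2) + s * δ ^ 2 * (c ^ 2 + d ^ 2) := by
    have h3 : 2 * (a * b) ≤ a ^ 2 + b ^ 2 := by nlinarith [sq_nonneg (a - b)]
    have h4 : 2 * (c * d) ≤ c ^ 2 + d ^ 2 := by nlinarith [sq_nonneg (c - d)]
    nlinarith [mul_le_mul_of_nonneg_left h3 hs0,
      mul_le_mul_of_nonneg_left h4 (by positivity : (0:ℝ) ≤ s * δ ^ 2)]
  linarith

/-- Parametrized two-sided bounds in the Case II setting. -/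
theorem stmt_12
    {H1 H2 : Type*} [NormedAddCommGroup H1] [InnerProductSpace ℂ H1] [CompleteSpace H1]
    [NormedAddCommGroup H2] [InnerProductSpace ℂ H2] [CompleteSpace H2]
    (A : H1 →ₗ.[ℂ] H2) (hd : Dense (A.domain : Set H1)) (hc : A.IsClosed)
    (f : H1) (x xt : A.domain) (y yt : A.adjoint.domain)
    (h1 : A.adjoint y + Complex.I • (x : H1) = f) (h2 : A x = (y : H2))
    (δ : ℝ) (hδ : 0 < δ) :
    (1 - Real.sqrt 2 / (2 * δ)) * (‖(x : H1) - (xt : H1)‖ ^ 2 + ‖A (x - xt)‖ ^ 2)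
      + (1 - Real.sqrt 2 * δ / 2) * (‖(y : H2) - (yt : H2)‖ ^ 2 + ‖A.adjoint (y - yt)‖ ^ 2)
      ≤ ‖f - Complex.I • (xt : H1) - A.adjoint yt‖ ^ 2 + ‖(yt : H2) - A xt‖ ^ 2 ∧
    ‖f - Complex.I • (xt : H1) - A.adjoint yt‖ ^ 2 + ‖(yt : H2) - A xt‖ ^ 2
      ≤ (1 + Real.sqrt 2 / (2 * δ)) * (‖(x : H1) - (xt : H1)‖ ^ 2 + ‖A (x - xt)‖ ^ 2)
        + (1 + Real.sqrt 2 * δ / 2) * (‖(y : H2) - (yt : H2)‖ ^ 2 + ‖A.adjoint (y - yt)‖ ^ 2) := by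
  set u : A.domain := x - xt with hu
  set v : A.adjoint.domain := y - yt with hv
  have hucoe : ((u : H1)) = (x : H1) - (xt : H1) := rfl
  have hvcoe : ((v : H2)) = (y : H2) - (yt : H2) := rfl
  have hAu : A u = A x - A xt := A.map_sub x xt
  have hAv : A.adjoint v = A.adjoint y - A.adjoint yt := A.adjoint.map_sub y yt
  -- identify residuals
  have key1 : f - Complex.I • (xt : H1) - A.adjoint yt
      = A.adjoint v + Complex.I • (u : H1) := by
    rw [← h1, hAv, hucoe, smul_sub]; abel
  have key2 : (yt : H2) - A xt = A u - (v : H2) := by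
    rw [hAu, h2, hvcoe]; abel
  clear_value u v
  -- the inner product
  set z : ℂ := ⟪(v : H2), A u⟫ with hz
  have hadj : ⟪((A.adjoint v : H1)), ((u : H1))⟫ = z :=
    (LinearPMap.adjoint_isFormalAdjoint hd) v u
  set r : ℝ := z.re + z.im with hrdef
  -- norm expansions
  have e1 : ‖A.adjoint v + Complex.I • (u : H1)‖ ^ 2
      = ‖(A.adjoint v : H1)‖ ^ 2 + (-2 * z.im) + ‖(u : H1)‖ ^ 2 := by
    rw [@norm_add_sq ℂ _ _ _ _ (A.adjoint v) (Complex.I • (u : H1))]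
    rw [inner_smul_right, hadj]
    have : ‖Complex.I • (u : H1)‖ = ‖(u : H1)‖ := by
      rw [norm_smul, Complex.norm_I, one_mul]
    rw [this]
    simp [Complex.mul_re]
  have e2 : ‖A u - (v : H2)‖ ^ 2
      = ‖A u‖ ^ 2 - 2 * z.re + ‖(v : H2)‖ ^ 2 := by
    rw [@norm_sub_sq ℂ _ _ _ _ (A u) ((v : H2))]
    rw [← inner_conj_symm (A u) ((v : H2)), ← hz]
    simp
  clear_value z r
  -- bounds on z
  have hz1 : ‖z‖ ≤ ‖(v : H2)‖ * ‖A u‖ := by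
    rw [hz]; exact norm_inner_le_norm _ _
  have hz2 : ‖z‖ ≤ ‖(A.adjoint v : H1)‖ * ‖(u : H1)‖ := by
    rw [← hadj]; exact norm_inner_le_norm _ _
  have hnormsq : z.re ^ 2 + z.im ^ 2 = ‖z‖ ^ 2 := by
    rw [Complex.sq_norm, Complex.normSq_apply]; ring
  have hr : r ^ 2 ≤ 2 * (‖(u : H1)‖ * ‖A u‖) * (‖(v : H2)‖ * ‖(A.adjoint v : H1)‖) := by
    have h5 : r ^ 2 ≤ 2 * ‖z‖ ^ 2 := by nlinarith [sq_nonneg (z.re - z.im)]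
    have h6 : ‖z‖ ^ 2 ≤ (‖(v : H2)‖ * ‖A u‖) * (‖(A.adjoint v : H1)‖ * ‖(u : H1)‖) := by
      rw [sq]
      exact mul_le_mul hz1 hz2 (norm_nonneg z) (by positivity)
    calc r ^ 2 ≤ 2 * ‖z‖ ^ 2 := h5
    _ ≤ 2 * ((‖(v : H2)‖ * ‖A u‖) * (‖(A.adjoint v : H1)‖ * ‖(u : H1)‖)) := by linarith
    _ = 2 * (‖(u : H1)‖ * ‖A u‖) * (‖(v : H2)‖ * ‖(A.adjoint v : H1)‖) := by ring
  have hK := aux_key ‖(u : H1)‖ ‖A u‖ ‖(v : H2)‖ ‖(A.adjoint v : H1)‖ r δ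
    (norm_nonneg _) (norm_nonneg _) (norm_nonneg _) (norm_nonneg _) hδ hr
  have habs1 : r ≤ |r| := le_abs_self r
  have habs2 : -|r| ≤ r := neg_abs_le r
  rw [key1, key2, e1, e2, ← hucoe, ← hvcoe]
  have hrz : z.re + z.im = r := hrdef.symm
  set a := ‖(u : H1)‖ with ha
  set b := ‖A u‖ with hb
  set c := ‖(v : H2)‖ with hcc
  set d := ‖(A.adjoint v : H1)‖ with hdd
  clear_value a b c d
  constructor
  · linarith [hK, habs1, habs2, hrz]
  · linarith [hK, habs1, habs2, hrz]
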